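/- Assume (δ+λ)² < c α λ. Then 0 < S₂²(S₂+α) < S₁²(S₁+α), so that the barrier level b̃ := ln( S₂²(S₂+α) / (S₁²(S₁+α)) ) / (S₁ − S₂) is strictly positive, and the second derivative of h vanishes there: h''(b̃) = 0. -/

import Mathlib

open Real

/-- `h(x) = (S₁+α) e^{S₁ x} − (S₂+α) e^{S₂ x}`. -/
noncomputable def hfun (α S₁ S₂ : ℝ) : ℝ → ℝ :=
  fun x => (S₁ + α) * Real.exp (S₁ * x) - (S₂ + α) * Real.exp (S₂ * x)

/-- `b̃ = ln( S₂²(S₂+α) / (S₁²(S₁+α)) ) / (S₁ − S₂)`. -/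
noncomputable def btilde (α S₁ S₂ : ℝ) : ℝ :=
  Real.log (S₂ ^ 2 * (S₂ + α) / (S₁ ^ 2 * (S₁ + α))) / (S₁ - S₂)

lemma deriv_hfun (α S₁ S₂ : ℝ) :
    deriv (hfun α S₁ S₂) =
      fun x => S₁ * (S₁ + α) * Real.exp (S₁ * x) - S₂ * (S₂ + α) * Real.exp (S₂ * x) := by
  funext x
  have h1 : HasDerivAt (fun y => Real.exp (S₁ * y)) (Real.exp (S₁ * x) * (S₁ * 1)) x :=
    ((hasDerivAt_id x).const_mul S₁).exp
  have h2 : HasDerivAt (fun y => Real.exp (S₂ * y)) (Real.exp (S₂ * x) * (S₂ * 1)) x :=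
    ((hasDerivAt_id x).const_mul S₂).exp
  have H : HasDerivAt (hfun α S₁ S₂)
      (S₁ * (S₁ + α) * Real.exp (S₁ * x) - S₂ * (S₂ + α) * Real.exp (S₂ * x)) x := by
    have := (h1.const_mul (S₁ + α)).sub (h2.const_mul (S₂ + α))
    refine this.congr_deriv ?_
    ring
  exact H.deriv

set_option maxHeartbeats 1000000 in
/-- If `(δ+λ)² < cαλ` then `0 < S₂²(S₂+α) < S₁²(S₁+α)`, hence `b̃ > 0`,
and `h''(b̃) = 0`. -/
theorem btilde_pos_and_smooth_fit
    (c lam δ α S₁ S₂ : ℝ) (hc : 0 < c) (hlam : 0 < lam) (hδ : 0 < δ) (hα : 0 < α)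
    (hS : S₁ < S₂)
    (hroot1 : c * S₁ ^ 2 + (c * α - δ - lam) * S₁ - δ * α = 0)
    (hroot2 : c * S₂ ^ 2 + (c * α - δ - lam) * S₂ - δ * α = 0)
    (hS1 : -α < S₁) (hS1' : S₁ < 0) (hS2 : 0 < S₂)
    (hpar : (δ + lam) ^ 2 < c * α * lam) :
    0 < S₂ ^ 2 * (S₂ + α) ∧
    S₂ ^ 2 * (S₂ + α) < S₁ ^ 2 * (S₁ + α) ∧
    0 < btilde α S₁ S₂ ∧
    deriv (deriv (hfun α S₁ S₂)) (btilde α S₁ S₂) = 0 := by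
  have hSne : S₁ - S₂ ≠ 0 := sub_ne_zero_of_ne (ne_of_lt hS)
  -- Vieta
  have hfac : (S₁ - S₂) * (c * (S₁ + S₂) + (c * α - δ - lam)) = 0 := by
    linear_combination hroot1 - hroot2
  have he' : c * (S₁ + S₂) + (c * α - δ - lam) = 0 :=
    (mul_eq_zero.mp hfac).resolve_left hSne
  have hp : c * (S₁ * S₂) + δ * α = 0 := by
    linear_combination S₁ * he' - hroot1
  have hKeq : c ^ 2 * (S₁ ^ 2 + S₁ * S₂ + S₂ ^ 2 + α * (S₁ + S₂))
      = (δ + lam) ^ 2 - c * α * lam := by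
    linear_combination (c * (S₁ + S₂) + δ + lam) * he' - c * hp
  have hK : S₁ ^ 2 + S₁ * S₂ + S₂ ^ 2 + α * (S₁ + S₂) < 0 := by
    nlinarith [mul_pos hc hc]
  -- part 1
  have hA2pos : 0 < S₂ ^ 2 * (S₂ + α) := by positivity
  -- part 2
  have hdiffpos : 0 < (S₁ - S₂) * (S₁ ^ 2 + S₁ * S₂ + S₂ ^ 2 + α * (S₁ + S₂)) :=
    mul_pos_of_neg_of_neg (by linarith) hK
  have h2 : S₂ ^ 2 * (S₂ + α) < S₁ ^ 2 * (S₁ + α) := by nlinarith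
  -- part 3
  have hS1ne : S₁ ≠ 0 := ne_of_lt hS1'
  have hA1pos : 0 < S₁ ^ 2 * (S₁ + α) := by
    have : 0 < S₁ ^ 2 := by positivity
    have : 0 < S₁ + α := by linarith
    positivity
  set r : ℝ := S₂ ^ 2 * (S₂ + α) / (S₁ ^ 2 * (S₁ + α)) with hr
  have hrpos : 0 < r := div_pos hA2pos hA1pos
  have hrlt1 : r < 1 := (div_lt_one hA1pos).mpr h2
  have hlogneg : Real.log r < 0 := Real.log_neg hrpos hrlt1
  have hbpos : 0 < btilde α S₁ S₂ :=
    div_pos_of_neg_of_neg hlogneg (by linarith)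
  refine ⟨hA2pos, h2, hbpos, ?_⟩
  -- second derivative at b̃
  set b : ℝ := btilde α S₁ S₂ with hb
  rw [deriv_hfun]
  have h1 : HasDerivAt (fun y => Real.exp (S₁ * y)) (Real.exp (S₁ * b) * (S₁ * 1)) b :=
    ((hasDerivAt_id b).const_mul S₁).exp
  have h2' : HasDerivAt (fun y => Real.exp (S₂ * y)) (Real.exp (S₂ * b) * (S₂ * 1)) b :=
    ((hasDerivAt_id b).const_mul S₂).exp
  have H : HasDerivAt
      (fun x => S₁ * (S₁ + α) * Real.exp (S₁ * x) - S₂ * (S₂ + α) * Real.exp (S₂ * x))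
      (S₁ ^ 2 * (S₁ + α) * Real.exp (S₁ * b) - S₂ ^ 2 * (S₂ + α) * Real.exp (S₂ * b)) b := by
    have := (h1.const_mul (S₁ * (S₁ + α))).sub (h2'.const_mul (S₂ * (S₂ + α)))
    refine this.congr_deriv ?_
    ring
  rw [H.deriv]
  -- show the value is 0
  have hbexp : Real.exp ((S₁ - S₂) * b) = r := by
    have : (S₁ - S₂) * b = Real.log r := by
      rw [hb, btilde, ← hr]
      field_simp
    rw [this, Real.exp_log hrpos]
  have hsplit : Real.exp (S₁ * b) = r * Real.exp (S₂ * b) := by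
    rw [← hbexp, ← Real.exp_add]; ring_nf
  rw [hsplit]
  have : S₁ ^ 2 * (S₁ + α) * r = S₂ ^ 2 * (S₂ + α) := by
    rw [hr]; field_simp; exact div_self (by linarith)
  nlinarith [this, Real.exp_pos (S₂ * b)]
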